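/- Let n ≥ 1 and r, s ≥ 0 be integers. For each fixed i with 1 ≤ i ≤ n, the inner quadrature weight λ_i of the generalized Gauss–Radau/Gauss–Lobatto formula is strictly positive: λ_i > 0. -/

import Mathlib

open MeasureTheory

/-- The generalized Gauss–Radau/Gauss–Lobatto quadrature
`Q_{n,r,s}(f) = Σ_{j<r} λ₀^{(j)} f^{(j)}(a) + Σ_{j<n} λ_j f(τ_j) + Σ_{j<s} (-1)^j λ_{n+1}^{(j)} f^{(j)}(b)`,
where derivatives are taken within `[a,b]`. -/
noncomputable def quad (a b : ℝ) (n r s : ℕ) (τ w0 wi w1 : ℕ → ℝ) (f : ℝ → ℝ) : ℝ :=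
  (∑ j ∈ Finset.range r, w0 j * iteratedDerivWithin j f (Set.Icc a b) a)
  + (∑ j ∈ Finset.range n, wi j * f (τ j))
  + (∑ j ∈ Finset.range s, (-1 : ℝ) ^ j * w1 j * iteratedDerivWithin j f (Set.Icc a b) b)

/-- Iterated derivatives within a set with unique derivatives of a polynomial function
agree with evaluation of the iterated formal derivative. -/
lemma poly_iteratedDerivWithin (p : Polynomial ℝ) {s : Set ℝ} (hs : UniqueDiffOn ℝ s)
    {x : ℝ} (hx : x ∈ s) (j : ℕ) :
    iteratedDerivWithin j (fun t => p.eval t) s x = (Polynomial.derivative^[j] p).eval x := by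
  induction j generalizing p x with
  | zero => simp
  | succ j ih =>
    rw [iteratedDerivWithin_succ', Function.iterate_succ_apply]
    have hcongr : Set.EqOn (derivWithin (fun t => p.eval t) s)
        (fun t => (Polynomial.derivative p).eval t) s := fun y hy => by
      simpa using p.derivWithin (hs.uniqueDiffWithinAt hy)
    calc iteratedDerivWithin j (derivWithin (fun t => p.eval t) s) s x
        = iteratedDerivWithin j (fun t => (Polynomial.derivative p).eval t) s x :=
          iteratedDerivWithin_congr hcongr hx
      _ = (Polynomial.derivative^[j] (Polynomial.derivative p)).eval x := ih _ hx

/-- the inner weights of a generalized Gauss–Radau/Gauss–Lobatto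
formula are strictly positive. -/
theorem inner_weights_pos
    (a b : ℝ) (hab : a < b)
    (μ : Measure ℝ) [IsFiniteMeasure μ]
    (hsupp : μ (Set.Icc a b)ᶜ = 0)
    (hinf : {x | x ∈ Set.Ioo a b ∧ ∀ ε > 0, 0 < μ (Set.Ioo (x - ε) (x + ε))}.Infinite)
    (n r s : ℕ) (hn : 1 ≤ n)
    (τ w0 wi w1 : ℕ → ℝ)
    (hτab : ∀ j < n, τ j ∈ Set.Ioo a b)
    (hτmono : ∀ i j, i < j → j < n → τ i < τ j)
    (hex : ∀ p : Polynomial ℝ, p.natDegree + 1 ≤ 2 * n + r + s →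
      quad a b n r s τ w0 wi w1 (fun t => p.eval t) = ∫ t, p.eval t ∂μ)
    (i : ℕ) (hi : i < n) :
    0 < wi i := by
  classical
  set S : Finset ℕ := (Finset.range n).erase i with hS
  set q : Polynomial ℝ := (Polynomial.X - Polynomial.C a) ^ r * (Polynomial.C b - Polynomial.X) ^ s
      * ∏ j ∈ S, (Polynomial.X - Polynomial.C (τ j)) ^ 2 with hq
  have hCbX : (Polynomial.C b - Polynomial.X : Polynomial ℝ) = -(Polynomial.X - Polynomial.C b) := by
    ring
  have hq0 : q ≠ 0 := by
    apply mul_ne_zero (mul_ne_zero (pow_ne_zero _ (Polynomial.X_sub_C_ne_zero a)) _)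
    · exact Finset.prod_ne_zero_iff.mpr fun j _ => pow_ne_zero _ (Polynomial.X_sub_C_ne_zero _)
    · rw [hCbX]
      exact pow_ne_zero _ (neg_ne_zero.mpr (Polynomial.X_sub_C_ne_zero b))
  have hqeval : ∀ t : ℝ, q.eval t = (t - a) ^ r * (b - t) ^ s * ∏ j ∈ S, (t - τ j) ^ 2 := by
    intro t
    simp [hq, Polynomial.eval_prod]
  -- degree bound
  have hdeg : q.natDegree + 1 ≤ 2 * n + r + s := by
    have h1 : ((Polynomial.X - Polynomial.C a : Polynomial ℝ) ^ r).natDegree ≤ r :=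
      Polynomial.natDegree_pow_le.trans (by simp)
    have h2 : ((Polynomial.C b - Polynomial.X : Polynomial ℝ) ^ s).natDegree ≤ s := by
      refine Polynomial.natDegree_pow_le.trans ?_
      rw [hCbX, Polynomial.natDegree_neg, Polynomial.natDegree_X_sub_C, mul_one]
    have h3 : (∏ j ∈ S, (Polynomial.X - Polynomial.C (τ j)) ^ 2).natDegree ≤ 2 * (n - 1) := by
      refine Polynomial.natDegree_prod_le _ _ |>.trans ?_
      have hcard : S.card = n - 1 := by
        rw [hS, Finset.card_erase_of_mem (Finset.mem_range.mpr hi), Finset.card_range]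
      have hb := Finset.sum_le_card_nsmul S
        (fun j => ((Polynomial.X - Polynomial.C (τ j)) ^ 2).natDegree) 2
        (fun j _ => Polynomial.natDegree_pow_le.trans (by simp))
      rw [hcard, smul_eq_mul, mul_comm] at hb
      exact hb
    have := (Polynomial.natDegree_mul_le (p := (Polynomial.X - Polynomial.C a) ^ r *
        (Polynomial.C b - Polynomial.X) ^ s)
        (q := ∏ j ∈ S, (Polynomial.X - Polynomial.C (τ j)) ^ 2)).trans
      (add_le_add (Polynomial.natDegree_mul_le.trans (add_le_add h1 h2)) h3)
    rw [← hq] at this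
    omega
  -- root multiplicities at endpoints
  have hra : r ≤ q.rootMultiplicity a := by
    rw [Polynomial.le_rootMultiplicity_iff hq0]
    exact ⟨(Polynomial.C b - Polynomial.X) ^ s * ∏ j ∈ S, (Polynomial.X - Polynomial.C (τ j)) ^ 2,
      by rw [hq]; ring⟩
  have hrb : s ≤ q.rootMultiplicity b := by
    rw [Polynomial.le_rootMultiplicity_iff hq0]
    have h1 : (Polynomial.X - Polynomial.C b : Polynomial ℝ) ^ s ∣
        (Polynomial.C b - Polynomial.X) ^ s :=
      pow_dvd_pow_of_dvd ⟨-1, by ring⟩ s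
    exact h1.trans ⟨(Polynomial.X - Polynomial.C a) ^ r *
      ∏ j ∈ S, (Polynomial.X - Polynomial.C (τ j)) ^ 2, by rw [hq]; ring⟩
  have hud : UniqueDiffOn ℝ (Set.Icc a b) := uniqueDiffOn_Icc hab
  have haI : a ∈ Set.Icc a b := Set.left_mem_Icc.mpr hab.le
  have hbI : b ∈ Set.Icc a b := Set.right_mem_Icc.mpr hab.le
  -- quadrature value of q
  have hquad : quad a b n r s τ w0 wi w1 (fun t => q.eval t) = wi i * q.eval (τ i) := by
    unfold quad
    have h0 : ∀ j ∈ Finset.range r,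
        w0 j * iteratedDerivWithin j (fun t => q.eval t) (Set.Icc a b) a = 0 := by
      intro j hj
      rw [poly_iteratedDerivWithin q hud haI j,
        show (Polynomial.derivative^[j] q).eval a = 0 from
          Polynomial.isRoot_iterate_derivative_of_lt_rootMultiplicity
            (lt_of_lt_of_le (Finset.mem_range.mp hj) hra), mul_zero]
    have h1 : ∀ j ∈ Finset.range s,
        (-1 : ℝ) ^ j * w1 j * iteratedDerivWithin j (fun t => q.eval t) (Set.Icc a b) b = 0 := by
      intro j hj
      rw [poly_iteratedDerivWithin q hud hbI j,
        show (Polynomial.derivative^[j] q).eval b = 0 from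
          Polynomial.isRoot_iterate_derivative_of_lt_rootMultiplicity
            (lt_of_lt_of_le (Finset.mem_range.mp hj) hrb), mul_zero]
    rw [Finset.sum_eq_zero h0, Finset.sum_eq_zero h1, add_zero, zero_add]
    refine Finset.sum_eq_single_of_mem i (Finset.mem_range.mpr hi) fun j hj hji => ?_
    have hzero : q.eval (τ j) = 0 := by
      rw [hqeval, Finset.prod_eq_zero (Finset.mem_erase.mpr ⟨hji, hj⟩) (by ring), mul_zero]
    simp [hzero]
  -- positivity of q at τ i
  have hτi := hτab i hi
  have hqτ : 0 < q.eval (τ i) := by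
    rw [hqeval]
    refine mul_pos (mul_pos (pow_pos (by linarith [hτi.1]) r)
      (pow_pos (by linarith [hτi.2]) s)) (Finset.prod_pos fun j hj => ?_)
    rcases Finset.mem_erase.mp hj with ⟨hji, hjn⟩
    have hne : τ i - τ j ≠ 0 := by
      rcases lt_or_gt_of_ne (Ne.symm hji) with h | h
      · have := hτmono i j h (Finset.mem_range.mp hjn)
        linarith
      · have := hτmono j i h hi
        linarith
    exact pow_two_pos_of_ne_zero hne
  -- a.e. membership in [a, b]
  have haeIcc : ∀ᵐ t ∂μ, t ∈ Set.Icc a b := by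
    rw [MeasureTheory.ae_iff]
    exact hsupp
  have hnonnegIcc : ∀ t ∈ Set.Icc a b, 0 ≤ q.eval t := by
    intro t ht
    rw [hqeval]
    refine mul_nonneg (mul_nonneg (pow_nonneg (by linarith [ht.1]) r)
      (pow_nonneg (by linarith [ht.2]) s)) (Finset.prod_nonneg fun j _ => sq_nonneg _)
  have hnn : 0 ≤ᵐ[μ] fun t => q.eval t := by
    filter_upwards [haeIcc] with t ht using hnonnegIcc t ht
  -- integrability
  have hIntOn : IntegrableOn (fun t => q.eval t) (Set.Icc a b) μ :=
    (Polynomial.continuous q).continuousOn.integrableOn_compact isCompact_Icc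
  have hInt : Integrable (fun t => q.eval t) μ := by
    have heq : (fun t => q.eval t) =ᵐ[μ] (Set.Icc a b).indicator fun t => q.eval t := by
      filter_upwards [haeIcc] with t ht
      rw [Set.indicator_of_mem ht]
    exact ((integrable_indicator_iff measurableSet_Icc).mpr hIntOn).congr heq.symm
  -- positivity of the integral
  obtain ⟨x, hxmem, hxroot⟩ :=
    ((hinf.diff (Polynomial.finite_setOf_isRoot hq0))).nonempty
  have hxpos : 0 < q.eval x := by
    have h0 : 0 ≤ q.eval x := hnonnegIcc x (Set.mem_Icc_of_Ioo hxmem.1)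
    rcases h0.lt_or_eq with h | h
    · exact h
    · exact absurd h.symm hxroot
  have hopen : IsOpen {t : ℝ | 0 < q.eval t} :=
    isOpen_lt continuous_const (Polynomial.continuous q)
  obtain ⟨ε, hε, hball⟩ := Metric.isOpen_iff.mp hopen x hxpos
  have hsub : Set.Ioo (x - ε) (x + ε) ⊆ Function.support fun t => q.eval t := by
    intro t ht
    have : t ∈ Metric.ball x ε := by rwa [Real.ball_eq_Ioo]
    exact (hball this).ne'
  have hμpos : 0 < μ (Function.support fun t => q.eval t) :=
    lt_of_lt_of_le (hxmem.2 ε hε) (measure_mono hsub)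
  have hipos : 0 < ∫ t, q.eval t ∂μ :=
    (integral_pos_iff_support_of_nonneg_ae hnn hInt).mpr hμpos
  have hfinal : 0 < wi i * q.eval (τ i) := by
    rw [← hex q hdeg, hquad] at hipos
    exact hipos
  nlinarith [hfinal, hqτ]
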